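/- Suppose w: X → (0,∞) is a Hardy weight with w ∈ F(X), and there exists 0 < γ < 1 such that |∇(w^{1/2})|² ≤ γ w² pointwise on X. Then for all φ ∈ C_c(X): (∑_{x ∈ supp φ} (Δφ(x))²)^{1/2} ≥ (1−γ) (∑_X w² φ²)^{1/2}. -/

import Mathlib

open Real

theorem stmt2
    (X : Type*) [Countable X]
    (b : X → X → ℝ)
    (hsymm : ∀ x y, b x y = b y x)
    (hdiag : ∀ x, b x x = 0)
    (hnonneg : ∀ x y, 0 ≤ b x y)
    (hloc : ∀ x, Summable (fun y => b x y))
    (w : X → ℝ) (hw : ∀ x, 0 < w x)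
    (hwF : ∀ x, Summable (fun y => b x y * |w y|))
    (hHardy : ∀ ψ : X → ℝ, (Function.support ψ).Finite →
      (∑' x, (1 / 2) * ∑' y, b x y * (ψ x - ψ y) ^ 2) ≥ ∑' x, w x * ψ x ^ 2)
    (γ : ℝ) (hγ0 : 0 < γ) (hγ1 : γ < 1)
    (heik : ∀ x, (1 / 2) * ∑' y, b x y * (Real.sqrt (w x) - Real.sqrt (w y)) ^ 2
      ≤ γ * (w x) ^ 2)
    (φ : X → ℝ) (hφ : (Function.support φ).Finite) :
    Real.sqrt (∑' x, if φ x = 0 then 0 else (∑' y, b x y * (φ x - φ y)) ^ 2)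
      ≥ (1 - γ) * Real.sqrt (∑' x, (w x) ^ 2 * φ x ^ 2) := by
  classical
  set S : Finset X := hφ.toFinset with hSdef
  have hSmem : ∀ x, x ∈ S ↔ φ x ≠ 0 := by
    intro x; simp [hSdef, Function.mem_support]
  have hSout : ∀ x ∉ S, φ x = 0 := by
    intro x hx; by_contra h; exact hx ((hSmem x).2 h)
  set u : X → ℝ := fun x => Real.sqrt (w x) with hudef
  have hu2 : ∀ x, u x ^ 2 = w x := fun x => Real.sq_sqrt (hw x).le
  set D : X → ℝ := fun x => ∑' y, b x y * (φ x - φ y) with hDdef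
  set A : ℝ := ∑ x ∈ S, (w x) ^ 2 * (φ x) ^ 2 with hAdef
  set B : ℝ := ∑ x ∈ S, (D x) ^ 2 with hBdef
  have hA0 : 0 ≤ A := Finset.sum_nonneg (fun x _ => by positivity)
  -- basic summability facts
  have hbx : ∀ y, Summable (fun x => b x y) := fun y =>
    (hloc y).congr (fun x => (hsymm y x))
  have hbw : ∀ x, Summable (fun y => b x y * w y) := by
    intro x
    exact (hwF x).congr (fun y => by rw [abs_of_pos (hw y)])
  have hsummD : ∀ x, Summable (fun y => b x y * (φ x - φ y)) := by
    intro x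
    have h1 : Summable (fun y => b x y * φ x) := (hloc x).mul_right _
    have h2 : Summable (fun y => b x y * φ y) :=
      summable_of_ne_finset_zero (s := S) (fun y hy => by rw [hSout y hy, mul_zero])
    exact (h1.sub h2).congr (fun y => by ring)
  -- the goal's tsums as finite sums
  have hA_eq : ∑' x, (w x) ^ 2 * φ x ^ 2 = A := by
    refine tsum_eq_sum (fun x hx => ?_)
    rw [hSout x hx]; ring
  have hgoal_eq : ∑' x, (if φ x = 0 then 0 else (∑' y, b x y * (φ x - φ y)) ^ 2) = B := by
    rw [tsum_eq_sum (s := S) (f := fun x => if φ x = 0 then 0 else (∑' y, b x y * (φ x - φ y)) ^ 2)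
        (fun x hx => by rw [if_pos (hSout x hx)])]
    refine Finset.sum_congr rfl (fun x hx => ?_)
    rw [if_neg ((hSmem x).1 hx)]
  -- Hardy inequality for ψ = u * φ
  have hψfin : (Function.support (fun x => u x * φ x)).Finite := by
    refine hφ.subset ?_
    intro x hx
    simp only [Function.mem_support] at hx ⊢
    intro h; exact hx (by rw [h, mul_zero])
  have hHA : A ≤ ∑' x, (1 / 2) * ∑' y, b x y * ((u x * φ x) - (u y * φ y)) ^ 2 := by
    have := hHardy (fun x => u x * φ x) hψfin
    have hl : ∑' x, w x * (u x * φ x) ^ 2 = A := by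
      rw [← hA_eq]
      refine tsum_congr (fun x => ?_)
      rw [mul_pow]
      rw [hu2 x]; ring
    rw [hl] at this
    exact this
  -- summability of the two pieces of the splitting, for each x
  have hsumm1 : ∀ x, Summable (fun y => b x y * (φ x - φ y) * (w x * φ x - w y * φ y)) := by
    intro x
    have h1 : Summable (fun y => b x y * (φ x - φ y) * (w x * φ x)) := (hsummD x).mul_right _
    have h2 : Summable (fun y => b x y * (φ x - φ y) * (w y * φ y)) :=
      summable_of_ne_finset_zero (s := S) (fun y hy => by rw [hSout y hy]; ring)
    exact (h1.sub h2).congr (fun y => by ring)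
  have hsumm3 : ∀ x, Summable (fun y => b x y * (φ x * φ y) * (u x - u y) ^ 2) :=
    fun x => summable_of_ne_finset_zero (s := S) (fun y hy => by rw [hSout y hy]; ring)
  -- pointwise splitting of the Hardy energy
  have hq : ∀ x, ∑' y, b x y * ((u x * φ x) - (u y * φ y)) ^ 2 =
      (∑' y, b x y * (φ x - φ y) * (w x * φ x - w y * φ y)) +
      ∑' y, b x y * (φ x * φ y) * (u x - u y) ^ 2 := by
    intro x
    rw [← Summable.tsum_add (hsumm1 x) (hsumm3 x)]
    refine tsum_congr (fun y => ?_)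
    rw [← hu2 x, ← hu2 y]; ring
  -- Green's formula term : value of T1
  have hg_eq : ∀ x, ∑' y, b x y * (φ x - φ y) * (w x * φ x - w y * φ y)
      = (w x * φ x) * D x - ∑ y ∈ S, b x y * (φ x - φ y) * (w y * φ y) := by
    intro x
    have h1 : Summable (fun y => b x y * (φ x - φ y) * (w x * φ x)) := (hsummD x).mul_right _
    have h2 : Summable (fun y => b x y * (φ x - φ y) * (w y * φ y)) :=
      summable_of_ne_finset_zero (s := S) (fun y hy => by rw [hSout y hy]; ring)
    calc ∑' y, b x y * (φ x - φ y) * (w x * φ x - w y * φ y)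
        = ∑' y, (b x y * (φ x - φ y) * (w x * φ x) - b x y * (φ x - φ y) * (w y * φ y)) :=
          tsum_congr (fun y => by ring)
      _ = (∑' y, b x y * (φ x - φ y) * (w x * φ x)) -
            ∑' y, b x y * (φ x - φ y) * (w y * φ y) := Summable.tsum_sub h1 h2
      _ = (w x * φ x) * D x - ∑ y ∈ S, b x y * (φ x - φ y) * (w y * φ y) := by
          have eA : ∑' y, b x y * (φ x - φ y) * (w x * φ x) = w x * φ x * D x := by
            rw [tsum_mul_right]; exact mul_comm _ _
          have eB : ∑' y, b x y * (φ x - φ y) * (w y * φ y)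
              = ∑ y ∈ S, b x y * (φ x - φ y) * (w y * φ y) :=
            tsum_eq_sum (fun y hy => by
              show b x y * (φ x - φ y) * (w y * φ y) = 0
              rw [hSout y hy]; ring)
          rw [eA, eB]
  have hgsumm : Summable (fun x => ∑ y ∈ S, b x y * (φ x - φ y) * (w y * φ y)) := by
    refine summable_sum (fun y _ => ?_)
    have h1 : Summable (fun x => b x y * φ x * (w y * φ y)) :=
      summable_of_ne_finset_zero (s := S) (fun x hx => by rw [hSout x hx]; ring)
    have h2 : Summable (fun x => b x y * (φ y * (w y * φ y))) := (hbx y).mul_right _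
    exact (h1.sub h2).congr (fun x => by ring)
  have hhDsumm : Summable (fun x => (w x * φ x) * D x) :=
    summable_of_ne_finset_zero (s := S) (fun x hx => by rw [hSout x hx]; ring)
  have hT1summ : Summable (fun x => (1 : ℝ) / 2 *
      ∑' y, b x y * (φ x - φ y) * (w x * φ x - w y * φ y)) := by
    refine (((hhDsumm.sub hgsumm).mul_left (1 / 2)).congr (fun x => ?_))
    rw [hg_eq x]
  have hT3summ : Summable (fun x => (1 : ℝ) / 2 *
      ∑' y, b x y * (φ x * φ y) * (u x - u y) ^ 2) := by
    refine summable_of_ne_finset_zero (s := S) (fun x hx => ?_)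
    have : ∀ y, b x y * (φ x * φ y) * (u x - u y) ^ 2 = 0 := by
      intro y; rw [hSout x hx]; ring
    rw [tsum_congr this, tsum_zero, mul_zero]
  -- split the Hardy energy
  have hQsplit : ∑' x, (1 / 2) * ∑' y, b x y * ((u x * φ x) - (u y * φ y)) ^ 2 =
      (∑' x, (1 : ℝ) / 2 * ∑' y, b x y * (φ x - φ y) * (w x * φ x - w y * φ y)) +
      ∑' x, (1 : ℝ) / 2 * ∑' y, b x y * (φ x * φ y) * (u x - u y) ^ 2 := by
    rw [← Summable.tsum_add hT1summ hT3summ]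
    refine tsum_congr (fun x => ?_)
    rw [hq x]; ring
  -- T1 equals the Green / Laplacian pairing
  have hT1 : ∑' x, (1 : ℝ) / 2 * ∑' y, b x y * (φ x - φ y) * (w x * φ x - w y * φ y)
      = ∑ x ∈ S, (w x * φ x) * D x := by
    have e1 : ∑' x, (w x * φ x) * D x = ∑ x ∈ S, (w x * φ x) * D x :=
      tsum_eq_sum (fun x hx => by rw [hSout x hx]; ring)
    have e2 : ∑' x, ∑ y ∈ S, b x y * (φ x - φ y) * (w y * φ y)
        = - ∑ y ∈ S, (w y * φ y) * D y := by
      rw [Summable.tsum_finsetSum (fun y _ => by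
        have h1 : Summable (fun x => b x y * φ x * (w y * φ y)) :=
          summable_of_ne_finset_zero (s := S) (fun x hx => by rw [hSout x hx]; ring)
        have h2 : Summable (fun x => b x y * (φ y * (w y * φ y))) := (hbx y).mul_right _
        exact (h1.sub h2).congr (fun x => by ring))]
      rw [← Finset.sum_neg_distrib]
      refine Finset.sum_congr rfl (fun y _ => ?_)
      have hx : ∑' x, b x y * (φ x - φ y) * (w y * φ y)
          = (∑' x, b x y * (φ x - φ y)) * (w y * φ y) := tsum_mul_right
      have hneg : ∑' x, b x y * (φ x - φ y) = - D y := by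
        have h : ∀ x, b x y * (φ x - φ y) = -(b y x * (φ y - φ x)) := fun x => by
          rw [hsymm y x]; ring
        calc ∑' x, b x y * (φ x - φ y) = ∑' x, -(b y x * (φ y - φ x)) := tsum_congr h
          _ = -∑' x, b y x * (φ y - φ x) := tsum_neg
          _ = - D y := rfl
      rw [hx, hneg]; ring
    calc ∑' x, (1 : ℝ) / 2 * ∑' y, b x y * (φ x - φ y) * (w x * φ x - w y * φ y)
        = ∑' x, (1 : ℝ) / 2 * ((w x * φ x) * D x
            - ∑ y ∈ S, b x y * (φ x - φ y) * (w y * φ y)) :=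
          tsum_congr (fun x => by rw [hg_eq x])
      _ = (1 : ℝ) / 2 * ∑' x, ((w x * φ x) * D x
            - ∑ y ∈ S, b x y * (φ x - φ y) * (w y * φ y)) := tsum_mul_left
      _ = (1 : ℝ) / 2 * (∑' x, (w x * φ x) * D x
            - ∑' x, ∑ y ∈ S, b x y * (φ x - φ y) * (w y * φ y)) := by
          rw [Summable.tsum_sub hhDsumm hgsumm]
      _ = ∑ x ∈ S, (w x * φ x) * D x := by
          rw [e1, e2]; ring
  -- T3 is bounded by γ * A
  have hksumm : ∀ x, Summable (fun y => b x y * (u x - u y) ^ 2) := by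
    intro x
    have hmaj : Summable (fun y => b x y * (2 * w x) + 2 * (b x y * w y)) :=
      ((hloc x).mul_right (2 * w x)).add ((hbw x).mul_left 2)
    refine Summable.of_nonneg_of_le (fun y => mul_nonneg (hnonneg x y) (sq_nonneg _))
      (fun y => ?_) hmaj
    have h1 : (u x - u y) ^ 2 ≤ 2 * w x + 2 * w y := by
      nlinarith [sq_nonneg (u x + u y), hu2 x, hu2 y]
    nlinarith [hnonneg x y, mul_le_mul_of_nonneg_left h1 (hnonneg x y)]
  have hktsum : ∀ x, ∑ y ∈ S, b x y * (u x - u y) ^ 2 ≤ 2 * γ * (w x) ^ 2 := by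
    intro x
    have h1 : ∑ y ∈ S, b x y * (u x - u y) ^ 2 ≤ ∑' y, b x y * (u x - u y) ^ 2 :=
      Summable.sum_le_tsum S (fun y _ => mul_nonneg (hnonneg x y) (sq_nonneg _)) (hksumm x)
    have h2 := heik x
    rw [hudef]
    linarith
  have hT3 : ∑' x, (1 : ℝ) / 2 * ∑' y, b x y * (φ x * φ y) * (u x - u y) ^ 2 ≤ γ * A := by
    have e1 : ∑' x, (1 : ℝ) / 2 * ∑' y, b x y * (φ x * φ y) * (u x - u y) ^ 2
        = ∑ x ∈ S, (1 : ℝ) / 2 * ∑ y ∈ S, b x y * (φ x * φ y) * (u x - u y) ^ 2 := by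
      rw [tsum_eq_sum (s := S) (fun x hx => by
        have : ∀ y, b x y * (φ x * φ y) * (u x - u y) ^ 2 = 0 := by
          intro y; rw [hSout x hx]; ring
        rw [tsum_congr this, tsum_zero, mul_zero])]
      refine Finset.sum_congr rfl (fun x _ => ?_)
      rw [tsum_eq_sum (s := S) (fun y hy => by rw [hSout y hy]; ring)]
    rw [e1]
    have step1 : ∑ x ∈ S, (1 : ℝ) / 2 * ∑ y ∈ S, b x y * (φ x * φ y) * (u x - u y) ^ 2
        ≤ ∑ x ∈ S, (1 : ℝ) / 2 * ∑ y ∈ S,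
            (1 / 2) * (φ x ^ 2 + φ y ^ 2) * (b x y * (u x - u y) ^ 2) := by
      refine Finset.sum_le_sum (fun x _ => ?_)
      have : ∑ y ∈ S, b x y * (φ x * φ y) * (u x - u y) ^ 2
          ≤ ∑ y ∈ S, (1 / 2) * (φ x ^ 2 + φ y ^ 2) * (b x y * (u x - u y) ^ 2) := by
        refine Finset.sum_le_sum (fun y _ => ?_)
        have hk : 0 ≤ b x y * (u x - u y) ^ 2 := mul_nonneg (hnonneg x y) (sq_nonneg _)
        nlinarith [sq_nonneg (φ x - φ y), mul_nonneg (sq_nonneg (φ x - φ y)) hk]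
      linarith
    have step2 : ∑ x ∈ S, (1 : ℝ) / 2 * ∑ y ∈ S,
          (1 / 2) * (φ x ^ 2 + φ y ^ 2) * (b x y * (u x - u y) ^ 2)
        = ∑ x ∈ S, φ x ^ 2 * ((1 : ℝ) / 2 * ∑ y ∈ S, b x y * (u x - u y) ^ 2) := by
      have key : ∑ x ∈ S, ∑ y ∈ S, φ y ^ 2 * (b x y * (u x - u y) ^ 2)
          = ∑ x ∈ S, ∑ y ∈ S, φ x ^ 2 * (b x y * (u x - u y) ^ 2) := by
        rw [Finset.sum_comm]
        exact Finset.sum_congr rfl fun x _ => Finset.sum_congr rfl fun y _ => by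
          rw [hsymm y x]; ring
      have l1 : ∑ x ∈ S, (1 : ℝ) / 2 * ∑ y ∈ S,
            (1 / 2) * (φ x ^ 2 + φ y ^ 2) * (b x y * (u x - u y) ^ 2)
          = ∑ x ∈ S, ((1 : ℝ) / 4 * ∑ y ∈ S, φ x ^ 2 * (b x y * (u x - u y) ^ 2)
              + (1 : ℝ) / 4 * ∑ y ∈ S, φ y ^ 2 * (b x y * (u x - u y) ^ 2)) := by
        refine Finset.sum_congr rfl fun x _ => ?_
        rw [Finset.mul_sum, Finset.mul_sum, Finset.mul_sum, ← Finset.sum_add_distrib]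
        exact Finset.sum_congr rfl fun y _ => by ring
      have l2 : ∑ x ∈ S, φ x ^ 2 * ((1 : ℝ) / 2 * ∑ y ∈ S, b x y * (u x - u y) ^ 2)
          = ∑ x ∈ S, ((1 : ℝ) / 4 * ∑ y ∈ S, φ x ^ 2 * (b x y * (u x - u y) ^ 2)
              + (1 : ℝ) / 4 * ∑ y ∈ S, φ x ^ 2 * (b x y * (u x - u y) ^ 2)) := by
        refine Finset.sum_congr rfl fun x _ => ?_
        rw [← Finset.mul_sum]
        ring
      rw [l1, l2, Finset.sum_add_distrib, Finset.sum_add_distrib]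
      congr 1
      rw [← Finset.mul_sum, ← Finset.mul_sum, key]
    have step3 : ∑ x ∈ S, φ x ^ 2 * ((1 : ℝ) / 2 * ∑ y ∈ S, b x y * (u x - u y) ^ 2)
        ≤ γ * A := by
      have hb : ∀ x ∈ S, φ x ^ 2 * ((1 : ℝ) / 2 * ∑ y ∈ S, b x y * (u x - u y) ^ 2)
          ≤ φ x ^ 2 * (γ * (w x) ^ 2) := by
        intro x _
        refine mul_le_mul_of_nonneg_left ?_ (sq_nonneg _)
        have := hktsum x
        linarith
      have e : ∑ x ∈ S, φ x ^ 2 * (γ * (w x) ^ 2) = γ * A := by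
        rw [hAdef, Finset.mul_sum]
        exact Finset.sum_congr rfl (fun x _ => by ring)
      calc ∑ x ∈ S, φ x ^ 2 * ((1 : ℝ) / 2 * ∑ y ∈ S, b x y * (u x - u y) ^ 2)
          ≤ ∑ x ∈ S, φ x ^ 2 * (γ * (w x) ^ 2) := Finset.sum_le_sum hb
        _ = γ * A := e
    linarith
  -- main estimate
  have hmain : (1 - γ) * A ≤ ∑ x ∈ S, (w x * φ x) * D x := by
    have := hHA
    rw [hQsplit, hT1] at this
    linarith
  -- Cauchy–Schwarz
  have hCS : (∑ x ∈ S, (w x * φ x) * D x) ^ 2 ≤ A * B := by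
    have := Finset.sum_mul_sq_le_sq_mul_sq S (fun x => w x * φ x) D
    have e : ∑ x ∈ S, (w x * φ x) ^ 2 = A := by
      rw [hAdef]; exact Finset.sum_congr rfl (fun x _ => by ring)
    rw [e] at this
    exact this
  -- conclude
  rw [hgoal_eq, hA_eq]
  have hB0 : 0 ≤ B := Finset.sum_nonneg (fun x _ => sq_nonneg _)
  rcases eq_or_lt_of_le hA0 with hA | hA
  · rw [← hA, Real.sqrt_zero, mul_zero]
    exact Real.sqrt_nonneg _
  · have hsA : 0 < Real.sqrt A := Real.sqrt_pos.2 hA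
    have h1 : (1 - γ) * A ≤ Real.sqrt A * Real.sqrt B := by
      have h2 : ∑ x ∈ S, (w x * φ x) * D x ≤ Real.sqrt (A * B) := by
        calc ∑ x ∈ S, (w x * φ x) * D x ≤ |∑ x ∈ S, (w x * φ x) * D x| := le_abs_self _
          _ = Real.sqrt ((∑ x ∈ S, (w x * φ x) * D x) ^ 2) := (Real.sqrt_sq_eq_abs _).symm
          _ ≤ Real.sqrt (A * B) := Real.sqrt_le_sqrt hCS
      rw [Real.sqrt_mul hA0] at h2
      linarith
    have hAsq : A = Real.sqrt A * Real.sqrt A := (Real.mul_self_sqrt hA0).symm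
    have h3 : ((1 - γ) * Real.sqrt A) * Real.sqrt A ≤ Real.sqrt B * Real.sqrt A := by
      nlinarith
    exact ge_iff_le.2 (le_of_mul_le_mul_right h3 hsA)
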